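/- Let G be a group, s ∈ G, T an abelian subgroup of G normalized by s (i.e., sTs⁻¹ = T), and m, k coprime positive integers with s^m ∈ T. If the k-th power map P_k : T → T is surjective, then the k-th power map on the centralizer Z_T(s) = {t ∈ T : st = ts} is surjective, i.e., every element of Z_T(s) has a k-th root in Z_T(s). -/
import Mathlib


/-- If `T` is an abelian subgroup of `G` normalized by `s`
(`s T s⁻¹ = T`), `s ^ m ∈ T`, `gcd(m, k) = 1`, and the `k`-th power map is
surjective on `T`, then every element of `Z_T(s)` has a `k`-th root in
`Z_T(s)`. -/
theorem stmt1 {G : Type*} [Group G] (T : Subgroup G) (s : G) (m k : ℕ)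
    (hm : 0 < m) (hk : 0 < k) (hcop : Nat.Coprime m k)
    (habelian : ∀ a ∈ T, ∀ b ∈ T, a * b = b * a)
    (hnorm : ∀ t : G, t ∈ T ↔ s * t * s⁻¹ ∈ T)
    (hsm : s ^ m ∈ T)
    (hsurj : ∀ x ∈ T, ∃ y ∈ T, y ^ k = x) :
    ∀ x ∈ T, s * x = x * s → ∃ y ∈ T, s * y = y * s ∧ y ^ k = x := by
  letI : CommGroup T :=
    { (inferInstance : Group T) with
      mul_comm := fun a b => Subtype.ext (habelian a a.2 b b.2) }
  intro x hx hxs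
  obtain ⟨y, hyT, hyk⟩ := hsurj x hx
  set xT : T := ⟨x, hx⟩ with hxT
  set yT : T := ⟨y, hyT⟩ with hyT'
  -- conjugation by s as a monoid hom on T
  have hφmem : ∀ t : G, t ∈ T → s * t * s⁻¹ ∈ T := fun t ht => (hnorm t).mp ht
  let φ : T →* T :=
    { toFun := fun t => ⟨s * (t : G) * s⁻¹, hφmem t t.2⟩
      map_one' := by ext; simp
      map_mul' := fun a b => by ext; push_cast; group }
  have hφiter : ∀ (i : ℕ) (t : T), ((φ^[i] t : T) : G) = s ^ i * (t : G) * (s ^ i)⁻¹ := by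
    intro i
    induction i with
    | zero => intro t; simp
    | succ n ih =>
      intro t
      rw [Function.iterate_succ_apply']
      show s * ((φ^[n] t : T) : G) * s⁻¹ = _
      rw [ih t, pow_succ']
      group
  have hφm : φ^[m] yT = yT := by
    apply Subtype.ext
    rw [hφiter]
    have h := habelian (s ^ m) hsm y hyT
    show s ^ m * y * (s ^ m)⁻¹ = y
    rw [h]; group
  have hφx : φ xT = xT := by
    apply Subtype.ext
    show s * x * s⁻¹ = x
    rw [hxs]; group
  have hφix : ∀ i, φ^[i] xT = xT := fun i => Function.iterate_fixed hφx i
  set z : T := ∏ i ∈ Finset.range m, φ^[i] yT with hz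
  have hzφ : φ z = z := by
    rw [hz, map_prod]
    have h1 : ∀ i ∈ Finset.range m, φ (φ^[i] yT) = φ^[i + 1] yT := fun i _ =>
      (Function.iterate_succ_apply' φ i yT).symm
    rw [Finset.prod_congr rfl h1]
    have h2 := Finset.prod_range_succ' (fun i => φ^[i] yT) m
    have h3 := Finset.prod_range_succ (fun i => φ^[i] yT) m
    rw [h3] at h2
    simp only [Function.iterate_zero_apply] at h2
    rw [hφm] at h2
    exact mul_right_cancel h2.symm
  have hzs : s * (z : G) = (z : G) * s := by
    have h := congrArg (Subtype.val) hzφ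
    have h' : s * (z : G) * s⁻¹ = (z : G) := h
    calc s * (z : G) = s * (z : G) * s⁻¹ * s := by group
    _ = (z : G) * s := by rw [h']
  have hyTk : yT ^ k = xT := Subtype.ext (by push_cast; exact hyk)
  have hzk : z ^ k = xT ^ m := by
    rw [hz, ← Finset.prod_pow]
    have h2 : ∀ i : ℕ, (φ^[i] yT) ^ k = φ^[i] (yT ^ k) := by
      intro i
      induction i with
      | zero => simp
      | succ n ih =>
        rw [Function.iterate_succ_apply', Function.iterate_succ_apply', ← ih, map_pow]
    have h1 : ∀ i ∈ Finset.range m, (φ^[i] yT) ^ k = xT := by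
      intro i _
      rw [h2, hyTk, hφix]
    rw [Finset.prod_congr rfl h1, Finset.prod_const, Finset.card_range]
  -- Bézout
  obtain ⟨a, b, hab⟩ : ∃ a b : ℤ, (m : ℤ) * a + (k : ℤ) * b = 1 := by
    refine ⟨Nat.gcdA m k, Nat.gcdB m k, ?_⟩
    have h := Nat.gcd_eq_gcd_ab m k
    rw [hcop] at h
    push_cast at h
    linarith
  set w : T := z ^ a * xT ^ b with hw
  have hzint : z ^ (k : ℤ) = xT ^ (m : ℤ) := by
    rw [zpow_natCast, zpow_natCast, hzk]
  have hwk : w ^ k = xT := by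
    calc w ^ k = w ^ (k : ℤ) := (zpow_natCast w k).symm
    _ = (z ^ a) ^ (k : ℤ) * (xT ^ b) ^ (k : ℤ) := by rw [hw, mul_zpow]
    _ = (z ^ (k : ℤ)) ^ a * (xT ^ (k : ℤ)) ^ b := by
        rw [← zpow_mul, ← zpow_mul, ← zpow_mul, ← zpow_mul, mul_comm a, mul_comm b]
    _ = xT ^ ((m : ℤ) * a) * xT ^ ((k : ℤ) * b) := by rw [hzint, ← zpow_mul, ← zpow_mul]
    _ = xT ^ ((m : ℤ) * a + (k : ℤ) * b) := (zpow_add xT _ _).symm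
    _ = xT := by rw [hab, zpow_one]
  refine ⟨(w : G), w.2, ?_, ?_⟩
  · have hcz : Commute s (z : G) := hzs
    have hcx : Commute s x := hxs
    have : Commute s ((w : G)) := by
      have hwval : (w : G) = (z : G) ^ a * x ^ b := by
        rw [hw]; push_cast; rfl
      rw [hwval]
      exact (hcz.zpow_right a).mul_right (hcx.zpow_right b)
    exact this
  · have := congrArg (Subtype.val) hwk
    push_cast at this
    exact this
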